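/- Let R be a commutative ring of prime characteristic p, 𝔞 an ideal of R, and k > l natural numbers. Then 𝔞^[k] ⊆ 𝔞^[l], where [·] denotes the generalized Frobenius power defined via base-p expansions. -/

import Mathlib

open scoped BigOperators

/-- The `q`-th bracket power of an ideal: the ideal generated by `q`-th powers
of elements of `a`. -/
def bracketPow {R : Type*} [CommRing R] (a : Ideal R) (q : ℕ) : Ideal R :=
  Ideal.span ((fun x => x ^ q) '' (a : Set R))

/-- The generalized `k`-th Frobenius power of an ideal, defined via the base-`p`
digits of `k`:  `𝔞^[k] = ∏ᵢ (𝔞^[pⁱ])^(kᵢ)` where `kᵢ = k / pⁱ % p` is the `i`-th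
base-`p` digit of `k` (digits with index `> k` vanish, so the product below suffices). -/
def frobPow {R : Type*} [CommRing R] (p : ℕ) (a : Ideal R) (k : ℕ) : Ideal R :=
  ∏ i ∈ Finset.range (k + 1), bracketPow a (p ^ i) ^ (k / p ^ i % p)

/-- Recursive form of `frobPow`, shifted by `c` digits. -/
def Fr {R : Type*} [CommRing R] (p : ℕ) (a : Ideal R) (c k : ℕ) : Ideal R :=
  if h : k = 0 ∨ p ≤ 1 then ⊤
  else bracketPow a (p ^ c) ^ (k % p) * Fr p a (c + 1) (k / p)
termination_by k
decreasing_by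
  push_neg at h
  exact Nat.div_lt_self (Nat.pos_of_ne_zero h.1) (by omega)
lemma Fr_zero {R : Type*} [CommRing R] (p : ℕ) (a : Ideal R) (c : ℕ) :
    Fr p a c 0 = ⊤ := by
  rw [Fr, dif_pos (Or.inl rfl)]

lemma Fr_eq {R : Type*} [CommRing R] (p : ℕ) (hp : 2 ≤ p) (a : Ideal R) (c k : ℕ)
    (hk : k ≠ 0) :
    Fr p a c k = bracketPow a (p ^ c) ^ (k % p) * Fr p a (c + 1) (k / p) := by
  rw [Fr, dif_neg (by omega)]

lemma bracketPow_succ_le {R : Type*} [CommRing R] (a : Ideal R) (p c : ℕ) :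
    bracketPow a (p ^ (c + 1)) ≤ (bracketPow a (p ^ c)) ^ p := by
  rw [bracketPow, Ideal.span_le]
  rintro _ ⟨x, hx, rfl⟩
  simp only
  rw [pow_succ, pow_mul]
  exact Ideal.pow_mem_pow (Ideal.subset_span (Set.mem_image_of_mem _ hx)) p

lemma frob_eq_Fr_aux {R : Type*} [CommRing R] (p : ℕ) (hp : 2 ≤ p) (a : Ideal R) :
    ∀ N c k, k < p ^ N →
      (∏ i ∈ Finset.range N, bracketPow a (p ^ (c + i)) ^ (k / p ^ i % p)) = Fr p a c k := by
  intro N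
  induction N with
  | zero =>
    intro c k hk
    simp at hk
    subst hk
    simp [Fr_zero]
  | succ N ih =>
    intro c k hk
    rcases eq_or_ne k 0 with rfl | hk0
    · rw [Fr_zero]
      simp [Ideal.one_eq_top, Ideal.top_pow]
    · rw [Fr_eq p hp a c k hk0]
      rw [Finset.prod_range_succ']
      have key : ∀ i, k / p ^ (i + 1) % p = (k / p) / p ^ i % p := by
        intro i
        rw [Nat.div_div_eq_div_mul, pow_succ']
      have h2 : k / p < p ^ N := by
        rw [Nat.div_lt_iff_lt_mul (by omega)]
        rw [pow_succ] at hk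
        exact hk
      calc (∏ i ∈ Finset.range N, bracketPow a (p ^ (c + (i + 1))) ^ (k / p ^ (i + 1) % p)) *
              bracketPow a (p ^ (c + 0)) ^ (k / p ^ 0 % p)
          = (∏ i ∈ Finset.range N, bracketPow a (p ^ (c + 1 + i)) ^ ((k / p) / p ^ i % p)) *
              bracketPow a (p ^ c) ^ (k % p) := by
            congr 1
            · apply Finset.prod_congr rfl
              intro i _
              rw [key i]
              ring_nf
            · simp
          _ = bracketPow a (p ^ c) ^ (k % p) * Fr p a (c + 1) (k / p) := by
            rw [ih (c + 1) (k / p) h2, mul_comm]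

lemma Fr_succ_le {R : Type*} [CommRing R] (p : ℕ) (hp : 2 ≤ p) (a : Ideal R) :
    ∀ k c, Fr p a c (k + 1) ≤ bracketPow a (p ^ c) * Fr p a c k := by
  intro k
  induction k using Nat.strong_induction_on with
  | _ k ih =>
    intro c
    rcases eq_or_ne k 0 with rfl | hk0
    · have h1 : (1 : ℕ) % p = 1 := Nat.mod_eq_of_lt (by omega)
      have h0 : 1 / p = 0 := Nat.div_eq_of_lt (by omega)
      rw [Fr_eq p hp a c 1 one_ne_zero, h1, h0, pow_one, Fr_zero, Fr_zero]
    · have hmod := Nat.mod_lt k (show 0 < p by omega)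
      have hdm := Nat.div_add_mod k p
      rcases eq_or_ne (k % p) (p - 1) with hc | hc
      · -- carry case
        have hk1 : k + 1 = p * (k / p + 1) := by rw [Nat.mul_succ]; omega
        have hdiv : (k + 1) / p = k / p + 1 := by
          rw [hk1, Nat.mul_div_cancel_left _ (by omega)]
        have hmod1 : (k + 1) % p = 0 := by
          rw [hk1, Nat.mul_mod_right]
        rw [Fr_eq p hp a c (k + 1) (Nat.succ_ne_zero k), hmod1, hdiv, pow_zero, one_mul]
        have hlt : k / p < k := Nat.div_lt_self (by omega) (by omega)
        have hpow : bracketPow a (p ^ c) ^ p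
            = bracketPow a (p ^ c) * bracketPow a (p ^ c) ^ (p - 1) := by
          have := (pow_succ' (bracketPow a (p ^ c)) (p - 1)).symm
          rw [show p - 1 + 1 = p from by omega] at this
          exact this.symm
        calc Fr p a (c + 1) (k / p + 1)
            ≤ bracketPow a (p ^ (c + 1)) * Fr p a (c + 1) (k / p) := ih _ hlt _
          _ ≤ (bracketPow a (p ^ c)) ^ p * Fr p a (c + 1) (k / p) :=
              Ideal.mul_mono_left (bracketPow_succ_le a p c)
          _ = bracketPow a (p ^ c) *
              ((bracketPow a (p ^ c)) ^ (p - 1) * Fr p a (c + 1) (k / p)) := by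
              rw [hpow, mul_assoc]
          _ = bracketPow a (p ^ c) * Fr p a c k := by
              rw [Fr_eq p hp a c k hk0, hc]
      · -- no carry
        have h1p : (1 : ℕ) % p = 1 := Nat.mod_eq_of_lt (by omega)
        have hmod1 : (k + 1) % p = k % p + 1 := by
          rw [Nat.add_mod, h1p, Nat.mod_eq_of_lt (by omega)]
        have hdiv : (k + 1) / p = k / p := by
          rw [show k + 1 = (k % p + 1) + p * (k / p) by omega,
            Nat.add_mul_div_left _ _ (show 0 < p by omega),
            Nat.div_eq_of_lt (by omega), Nat.zero_add]
        rw [Fr_eq p hp a c (k + 1) (Nat.succ_ne_zero k), hmod1, hdiv,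
          Fr_eq p hp a c k hk0, pow_succ]
        exact le_of_eq (by ring)

theorem stmt_5 {R : Type*} [CommRing R] (p : ℕ) (hp : p.Prime) [CharP R p]
    (a : Ideal R) (k l : ℕ) (hkl : k > l) :
    frobPow p a k ≤ frobPow p a l := by
  have hp2 : 2 ≤ p := hp.two_le
  have heq : ∀ m, frobPow p a m = Fr p a 0 m := by
    intro m
    rw [frobPow, ← frob_eq_Fr_aux p hp2 a (m + 1) 0 m (by
      calc m < p ^ m := Nat.lt_pow_self (by omega)
        _ ≤ p ^ (m + 1) := Nat.pow_le_pow_right (by omega) (by omega))]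
    apply Finset.prod_congr rfl
    intro i _
    rw [Nat.zero_add]
  have step : ∀ m, frobPow p a (m + 1) ≤ frobPow p a m := by
    intro m
    rw [heq, heq]
    exact le_trans (Fr_succ_le p hp2 a m 0) Ideal.mul_le_right
  have main : ∀ d, frobPow p a (l + 1 + d) ≤ frobPow p a l := by
    intro d
    induction d with
    | zero => exact step l
    | succ d ih =>
      have : l + 1 + (d + 1) = (l + 1 + d) + 1 := by omega
      rw [this]
      exact le_trans (step _) ih
  obtain ⟨d, rfl⟩ : ∃ d, k = l + 1 + d := ⟨k - l - 1, by omega⟩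
  exact main d
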